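/- arXiv:1203.1140 — 2 statements merged into one kernel-verified Lean document; each statement's English description precedes it below -/
import Mathlib

section
/- Let ζ, ζ' be general (ρ_1,ρ_2)-admissible point sets in R^d with ζ ∩ Q_R = ζ' ∩ Q_R, where Q_R = (−R,R)^d. Then every Delaunay simplex of ζ that intersects Q_{R−2ρ_2} is also a Delaunay simplex of ζ'; i.e., the Delaunay tessellations of ζ and ζ' coincide on Q_{R−2ρ_2}. -/
open Metric Set

/-- Hard-core condition with parameter `ρ₁`. -/
def HardCore {d : ℕ} (ρ₁ : ℝ) (ζ : Set (EuclideanSpace ℝ (Fin d))) : Prop :=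
  ∀ x ∈ ζ, ∀ y ∈ ζ, x ≠ y → ρ₁ ≤ dist x y

/-- Empty-space condition with parameter `ρ₂`. -/
def EmptySpace {d : ℕ} (ρ₂ : ℝ) (ζ : Set (EuclideanSpace ℝ (Fin d))) : Prop :=
  ∀ z : EuclideanSpace ℝ (Fin d), ∃ y ∈ ζ, dist z y < ρ₂

/-- `ζ` is general: no `d+1` points in a hyperplane, no `d+2` on a hypersphere. -/
def IsGeneral {d : ℕ} (ζ : Set (EuclideanSpace ℝ (Fin d))) : Prop :=
  (∀ s : Finset (EuclideanSpace ℝ (Fin d)), ↑s ⊆ ζ → s.card = d + 1 →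
    ¬ ∃ (f : EuclideanSpace ℝ (Fin d) →ₗ[ℝ] ℝ) (a : ℝ), f ≠ 0 ∧ ∀ x ∈ s, f x = a) ∧
  (∀ s : Finset (EuclideanSpace ℝ (Fin d)), ↑s ⊆ ζ → s.card = d + 2 →
    ¬ ∃ (c : EuclideanSpace ℝ (Fin d)) (r : ℝ), ∀ x ∈ s, dist x c = r)

/-- `(v, c, r)` is a Delaunay simplex of `ζ` with circumcentre `c` and circumradius `r`. -/
def IsDelaunaySimplex {d : ℕ} (ζ : Set (EuclideanSpace ℝ (Fin d)))
    (v : Fin (d + 1) → EuclideanSpace ℝ (Fin d))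
    (c : EuclideanSpace ℝ (Fin d)) (r : ℝ) : Prop :=
  Function.Injective v ∧ (∀ i, v i ∈ ζ) ∧ (∀ i, dist (v i) c = r) ∧
  ∀ z ∈ ζ, r ≤ dist z c

/-- The open cube `Q_R = (-R, R)^d`. -/
def cubeQ (d : ℕ) (R : ℝ) : Set (EuclideanSpace ℝ (Fin d)) := {x | ∀ i, |x i| < R}


lemma coord_le_dist {d : ℕ} (x y : EuclideanSpace ℝ (Fin d)) (j : Fin d) :
    |x j - y j| ≤ dist x y := by
  rw [EuclideanSpace.dist_eq]
  calc |x j - y j| = Real.sqrt ((x j - y j)^2) := (Real.sqrt_sq_eq_abs _).symm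
    _ ≤ _ := by
        simp only [Real.dist_eq, sq_abs]
        apply Real.sqrt_le_sqrt
        exact Finset.single_le_sum (f := fun i => (x i - y i)^2)
          (fun i _ => sq_nonneg _) (Finset.mem_univ j)

/-- If two general `(ρ₁,ρ₂)`-admissible point sets agree on `Q_R`, then every Delaunay
simplex of the first one intersecting `Q_{R-2ρ₂}` is also a Delaunay simplex of the second:
the Delaunay tessellations coincide on `Q_{R-2ρ₂}`. -/
theorem delaunay_local_coincidence (d : ℕ) (ρ₁ ρ₂ R : ℝ) (h₁ : 0 < ρ₁) (h₁₂ : ρ₁ < ρ₂)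
    (ζ ζ' : Set (EuclideanSpace ℝ (Fin d)))
    (hhc : HardCore ρ₁ ζ) (hes : EmptySpace ρ₂ ζ) (hgen : IsGeneral ζ)
    (hhc' : HardCore ρ₁ ζ') (hes' : EmptySpace ρ₂ ζ') (hgen' : IsGeneral ζ')
    (hagree : ζ ∩ cubeQ d R = ζ' ∩ cubeQ d R) :
    ∀ (v : Fin (d + 1) → EuclideanSpace ℝ (Fin d))
      (c : EuclideanSpace ℝ (Fin d)) (r : ℝ),
      IsDelaunaySimplex ζ v c r →
      ((convexHull ℝ (Set.range v)) ∩ cubeQ d (R - 2 * ρ₂)).Nonempty →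
      IsDelaunaySimplex ζ' v c r := by

  rintro v c r ⟨hinj, hmem, hdist, hmin⟩ ⟨p, hp_hull, hp_cube⟩
  -- circumradius bound: r < ρ₂
  obtain ⟨y, hyζ, hyc⟩ := hes c
  have hrρ : r < ρ₂ := lt_of_le_of_lt (hmin y hyζ) (by rwa [dist_comm])
  -- p is in the closed ball of radius r around c
  have hp_ball : dist p c ≤ r := by
    have : convexHull ℝ (Set.range v) ⊆ closedBall c r := by
      apply convexHull_min _ (convex_closedBall c r)
      rintro x ⟨i, rfl⟩
      simp [mem_closedBall, hdist i]
    simpa [mem_closedBall] using this hp_hull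
  have hr0 : 0 ≤ r := le_trans dist_nonneg hp_ball
  -- any point within 2ρ₂ of p is in cubeQ d R
  have hcube : ∀ x : EuclideanSpace ℝ (Fin d), dist x p < 2 * ρ₂ → x ∈ cubeQ d R := by
    intro x hx j
    have h1 : |x j - p j| ≤ dist x p := coord_le_dist x p j
    have h2 : |p j| < R - 2 * ρ₂ := hp_cube j
    calc |x j| ≤ |x j - p j| + |p j| := by
          have := abs_add_le (x j - p j) (p j); simpa using this
      _ < 2 * ρ₂ + (R - 2 * ρ₂) := by linarith
      _ = R := by ring
  have hvert : ∀ i, v i ∈ ζ' := by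
    intro i
    have hxp : dist (v i) p < 2 * ρ₂ := by
      calc dist (v i) p ≤ dist (v i) c + dist c p := dist_triangle _ _ _
        _ ≤ r + r := by rw [hdist i, dist_comm]; linarith
        _ < 2 * ρ₂ := by linarith
    have : v i ∈ ζ' ∩ cubeQ d R := by
      rw [← hagree]; exact ⟨hmem i, hcube _ hxp⟩
    exact this.1
  refine ⟨hinj, hvert, hdist, ?_⟩
  intro z hz
  by_contra hlt
  push_neg at hlt
  have hzp : dist z p < 2 * ρ₂ := by
    calc dist z p ≤ dist z c + dist c p := dist_triangle _ _ _
      _ < r + r := by rw [dist_comm c p]; linarith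
      _ < 2 * ρ₂ := by linarith
  have : z ∈ ζ ∩ cubeQ d R := by
    rw [hagree]; exact ⟨hz, hcube _ hzp⟩
  exact absurd (hmin z this.1) (not_le.mpr hlt)
end

section
/- Let S : O(R^d) × A → R be localized (S(D,ζ) depends only on ζ ∩ D) and smooth of order p ∈ [1,d): |S(D, ζ_1 ∪ ζ_2) − S(D, ζ_1)| ≤ C diam(D)^p (card(ζ_2 ∩ D))^{(d−p)/d} for rectilinear cubes D. Let ζ satisfy the hard-core condition with parameter ρ_1 > 0. Then for any rectilinear cube Q̂ and any z ∈ R^d, (1/R^d)|S(Q̂_R, ζ) − S(Q̂_R ∩ (Q̂_R + z), ζ)| → 0 as R → ∞, where Q̂_R = {Rx : x ∈ Q̂}. -/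
open Metric Set Filter Topology

/-- The closed rectilinear cube with lower-left corner `c` and side `r`. -/
def rectCube {d : ℕ} (c : EuclideanSpace ℝ (Fin d)) (r : ℝ) :
    Set (EuclideanSpace ℝ (Fin d)) :=
  {x | ∀ i, x i ∈ Set.Icc (c i) (c i + r)}

lemma aux_hardcore_mono {d : ℕ} {ρ₁ : ℝ} {ζ ζ' : Set (EuclideanSpace ℝ (Fin d))}
    (h : HardCore ρ₁ ζ) (hss : ζ' ⊆ ζ) : HardCore ρ₁ ζ' :=
  fun x hx y hy hxy => h x (hss hx) y (hss hy) hxy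

lemma aux_mem_rectCube {d : ℕ} {c : EuclideanSpace ℝ (Fin d)} {r : ℝ}
    {x : EuclideanSpace ℝ (Fin d)} :
    x ∈ rectCube c r ↔ ∀ i, x i ∈ Set.Icc (c i) (c i + r) := Iff.rfl

lemma aux_ncard_iUnion_le {α ι : Type*} [Fintype ι] (f : ι → Set α) :
    (⋃ i, f i).ncard ≤ ∑ i, (f i).ncard := by
  classical
  rw [← Set.biUnion_univ, ← Finset.coe_univ]
  induction (Finset.univ : Finset ι) using Finset.induction with
  | empty => simp
  | insert a s h ih =>
    rw [Finset.coe_insert, Set.biUnion_insert, Finset.sum_insert h]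
    exact le_trans (Set.ncard_union_le _ _) (by omega)

lemma aux_dist_le {d : ℕ} (x y : EuclideanSpace ℝ (Fin d)) {s : ℝ} (hs : 0 ≤ s)
    (h : ∀ i, dist (x i) (y i) ≤ s) : dist x y ≤ s * Real.sqrt d := by
  rw [EuclideanSpace.dist_eq]
  have hsum : ∑ i, dist (x i) (y i) ^ 2 ≤ ∑ _i : Fin d, s ^ 2 := by
    apply Finset.sum_le_sum
    intro i _
    have := h i
    nlinarith [dist_nonneg (x := x i) (y := y i)]
  calc Real.sqrt (∑ i, dist (x i) (y i) ^ 2) ≤ Real.sqrt (∑ _i : Fin d, s ^ 2) :=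
        Real.sqrt_le_sqrt hsum
    _ = s * Real.sqrt d := by
        rw [Finset.sum_const, Finset.card_univ, Fintype.card_fin, nsmul_eq_mul]
        rw [show (d : ℝ) * s ^ 2 = s ^ 2 * d by ring, Real.sqrt_mul (sq_nonneg s),
          Real.sqrt_sq hs]

/-- cell-counting lemma for hard-core sets in a box -/
lemma hardcore_box_count {d : ℕ} {ρ₁ s : ℝ} (hs : 0 < s)
    (hsd : s * Real.sqrt d < ρ₁) {ζ : Set (EuclideanSpace ℝ (Fin d))}
    (hζ : HardCore ρ₁ ζ) (a b : Fin d → ℝ) (n : Fin d → ℕ) (hn : ∀ i, 1 ≤ n i)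
    (hab : ∀ i, b i - a i ≤ s * n i) :
    (ζ ∩ {x | ∀ i, x i ∈ Set.Icc (a i) (b i)}).Finite ∧
    (ζ ∩ {x | ∀ i, x i ∈ Set.Icc (a i) (b i)}).ncard ≤ ∏ i, n i := by
  classical
  set A := ζ ∩ {x | ∀ i, x i ∈ Set.Icc (a i) (b i)} with hA
  set g : EuclideanSpace ℝ (Fin d) → (Fin d → ℕ) :=
    fun x i => min (⌊(x i - a i) / s⌋₊) (n i - 1) with hg
  have key : ∀ x ∈ A, ∀ i, s * (g x i) ≤ x i - a i ∧ x i - a i ≤ s * (g x i + 1) := by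
    intro x hx i
    have hxi := hx.2 i
    have h0 : 0 ≤ (x i - a i) / s := div_nonneg (by linarith [hxi.1]) hs.le
    have hub : (x i - a i) / s ≤ n i := by
      rw [div_le_iff₀ hs]
      calc x i - a i ≤ b i - a i := by linarith [hxi.2]
        _ ≤ s * n i := hab i
        _ = (n i : ℝ) * s := by ring
    constructor
    · have h1 : (g x i : ℝ) ≤ (x i - a i) / s := by
        have := Nat.floor_le h0
        have h2 : (g x i : ℝ) ≤ (⌊(x i - a i) / s⌋₊ : ℝ) := by
          exact_mod_cast Nat.cast_le.mpr (min_le_left _ _)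
        linarith
      calc s * (g x i) = (g x i) * s := by ring
        _ ≤ ((x i - a i)/s) * s := by nlinarith
        _ = x i - a i := by field_simp
    · by_cases hcase : ⌊(x i - a i) / s⌋₊ ≤ n i - 1
      · have : g x i = ⌊(x i - a i) / s⌋₊ := min_eq_left hcase
        rw [this]
        have := Nat.lt_floor_add_one ((x i - a i) / s)
        have h3 : (x i - a i)/s ≤ (⌊(x i - a i) / s⌋₊ : ℝ) + 1 := this.le
        calc x i - a i = ((x i - a i)/s) * s := by field_simp
          _ ≤ ((⌊(x i - a i) / s⌋₊ : ℝ) + 1) * s := by nlinarith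
          _ = s * ((⌊(x i - a i) / s⌋₊ : ℝ) + 1) := by ring
      · have hmin : g x i = n i - 1 := min_eq_right (le_of_not_ge hcase)
        rw [hmin]
        have h4 : ((n i - 1 : ℕ) : ℝ) + 1 = (n i : ℝ) := by
          have := hn i
          push_cast [Nat.cast_sub this]
          ring
        rw [h4]
        calc x i - a i = ((x i - a i)/s) * s := by field_simp
          _ ≤ (n i : ℝ) * s := by nlinarith
          _ = s * n i := by ring
  have hinj : Set.InjOn g A := by
    intro x hx y hy hgxy
    by_contra hne
    have hd : ρ₁ ≤ dist x y := hζ x hx.1 y hy.1 hne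
    have hcoord : ∀ i, dist (x i) (y i) ≤ s := by
      intro i
      have h1 := key x hx i
      have h2 := key y hy i
      rw [← hgxy] at h2
      rw [Real.dist_eq, abs_le]
      constructor <;> nlinarith [h1.1, h1.2, h2.1, h2.2]
    have := aux_dist_le x y hs.le hcoord
    linarith
  have himg : g '' A ⊆ ↑(Fintype.piFinset fun i => Finset.range (n i)) := by
    rintro _ ⟨x, hx, rfl⟩
    simp only [Finset.coe_sort_coe, Finset.mem_coe, Fintype.mem_piFinset, Finset.mem_range]
    intro i
    have h1 := hn i
    have h2 : g x i ≤ n i - 1 := min_le_right _ _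
    omega
  have hfin : A.Finite := by
    have : (g '' A).Finite :=
      (Fintype.piFinset fun i => Finset.range (n i)).finite_toSet.subset himg
    exact Set.Finite.of_finite_image this hinj
  refine ⟨hfin, ?_⟩
  calc A.ncard = (g '' A).ncard := (Set.ncard_image_of_injOn hinj).symm
    _ ≤ (↑(Fintype.piFinset fun i => Finset.range (n i)) : Set (Fin d → ℕ)).ncard :=
        Set.ncard_le_ncard himg (Finset.finite_toSet _)
    _ = ∏ i, n i := by
        rw [Set.ncard_coe_finset, Fintype.card_piFinset]
        simp

/-- If `S` is localized (its value depends only on the trace of the point set on the domain)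
and smooth of order `p ∈ [1, d)` on rectilinear cubes, and `ζ` is hard-core, then for any
rectilinear cube `Q̂` and any shift `z`,
`R^{-d} |S(Q̂_R, ζ) − S(Q̂_R ∩ (Q̂_R + z), ζ)| → 0` as `R → ∞`. -/
theorem localized_smooth_shift_error (d : ℕ) (hd : 0 < d) (p : ℝ) (hp : 1 ≤ p)
    (hpd : p < d) (C ρ₁ : ℝ) (hC : 0 < C) (hρ₁ : 0 < ρ₁)
    (S : Set (EuclideanSpace ℝ (Fin d)) → Set (EuclideanSpace ℝ (Fin d)) → ℝ)
    (hloc : ∀ (D D' ζ ζ' : Set (EuclideanSpace ℝ (Fin d))),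
      ζ ∩ D = ζ' ∩ D' → S D ζ = S D' ζ')
    (hsmooth : ∀ (c : EuclideanSpace ℝ (Fin d)) (r : ℝ), 0 < r →
      ∀ ζ₁ ζ₂ : Set (EuclideanSpace ℝ (Fin d)), HardCore ρ₁ ζ₁ → HardCore ρ₁ ζ₂ →
      |S (rectCube c r) (ζ₁ ∪ ζ₂) - S (rectCube c r) ζ₁| ≤
        C * Metric.diam (rectCube c r) ^ p *
          (((ζ₂ ∩ rectCube c r).ncard : ℝ)) ^ (((d : ℝ) - p) / d))
    (ζ : Set (EuclideanSpace ℝ (Fin d))) (hζ : HardCore ρ₁ ζ)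
    (c : EuclideanSpace ℝ (Fin d)) (r : ℝ) (hr : 0 < r)
    (z : EuclideanSpace ℝ (Fin d)) :
    Tendsto (fun R : ℝ => (1 / R ^ d) *
        |S (rectCube (R • c) (R * r)) ζ -
          S (rectCube (R • c) (R * r) ∩ ((fun x => x + z) '' rectCube (R • c) (R * r))) ζ|)
      atTop (nhds 0) := by
  classical
  have hd1 : 1 ≤ d := hd
  have hdR : (0:ℝ) < d := by exact_mod_cast hd
  have hdR1 : (1:ℝ) ≤ d := by exact_mod_cast hd1
  have hsq : 0 < Real.sqrt d := Real.sqrt_pos.mpr hdR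
  set s : ℝ := ρ₁ / (2 * Real.sqrt d) with hs_def
  have hs : 0 < s := by positivity
  have hsd : s * Real.sqrt d < ρ₁ := by
    have h1 : s * Real.sqrt d = ρ₁ / 2 := by
      rw [hs_def]; field_simp
    rw [h1]; linarith
  set w : ℝ := ‖z‖ with hw_def
  have hw : 0 ≤ w := norm_nonneg z
  set M : ℕ := ⌈w/s⌉₊ + 1 with hM_def
  have hwM : w ≤ s * M := by
    have h1 : w/s ≤ (M:ℝ) := le_trans (Nat.le_ceil _) (by exact_mod_cast Nat.le_succ _)
    calc w = (w/s)*s := by field_simp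
      _ ≤ (M:ℝ) * s := mul_le_mul_of_nonneg_right h1 hs.le
      _ = s * M := mul_comm _ _
  set α : ℝ := ((d:ℝ) - p)/d with hα_def
  have hα : 0 < α := div_pos (by linarith) hdR
  set A : ℝ := (d:ℝ) * 2 * M * (2*r/s)^(d-1) with hA_def
  have hA : 0 ≤ A := by positivity
  set e : ℝ := (p - (d:ℝ))/d with he_def
  have he : e < 0 := div_neg_of_neg_of_pos (by linarith) hdR
  have hz : ∀ i, |z i| ≤ w := by
    intro i
    have h1 : ‖z i‖^2 ≤ ∑ j, ‖z j‖^2 :=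
      Finset.single_le_sum (f := fun j => ‖z j‖^2) (fun j _ => sq_nonneg _) (Finset.mem_univ i)
    calc |z i| = Real.sqrt (‖z i‖^2) := by
          rw [Real.sqrt_sq_eq_abs, abs_norm, Real.norm_eq_abs]
      _ ≤ Real.sqrt (∑ j, ‖z j‖^2) := Real.sqrt_le_sqrt h1
      _ = w := (EuclideanSpace.norm_eq z).symm
  apply squeeze_zero' (g := fun R => (C * ((Real.sqrt d * r)^p * A^α)) * R ^ e)
  · filter_upwards [eventually_ge_atTop (1:ℝ)] with R hR1
    have hR0 : (0:ℝ) < R := lt_of_lt_of_le one_pos hR1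
    positivity
  · filter_upwards [eventually_ge_atTop (max 1 (s/r))] with R hRm
    have hR1 : (1:ℝ) ≤ R := le_trans (le_max_left _ _) hRm
    have hRs : s/r ≤ R := le_trans (le_max_right _ _) hRm
    have hR0 : (0:ℝ) < R := lt_of_lt_of_le one_pos hR1
    have hL : (0:ℝ) < R * r := by positivity
    set Q : Set (EuclideanSpace ℝ (Fin d)) := rectCube (R • c) (R * r) with hQ_def
    set T : Set (EuclideanSpace ℝ (Fin d)) := (fun x => x + z) '' Q with hT_def
    set N : ℕ := ⌈(R*r)/s⌉₊ with hN_def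
    have hN1 : 1 ≤ N := Nat.one_le_ceil_iff.mpr (by positivity)
    have hLN : R*r ≤ s*N := by
      have h1 : (R*r)/s ≤ (N:ℝ) := Nat.le_ceil _
      calc R*r = ((R*r)/s)*s := by field_simp
        _ ≤ (N:ℝ) * s := mul_le_mul_of_nonneg_right h1 hs.le
        _ = s * N := mul_comm _ _
    have hNle : (N:ℝ) ≤ (2*r/s) * R := by
      have hsr : s ≤ R * r := by
        rw [div_le_iff₀ hr] at hRs; linarith
      have h1 : (1:ℝ) ≤ (R*r)/s := by rw [le_div_iff₀ hs]; linarith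
      have h2 : (N:ℝ) < (R*r)/s + 1 := Nat.ceil_lt_add_one (by positivity)
      have h3 : (N:ℝ) ≤ 2*((R*r)/s) := by linarith
      calc (N:ℝ) ≤ 2*((R*r)/s) := h3
        _ = (2*r/s) * R := by field_simp
    -- the slabs
    set Blo : Fin d → Set (EuclideanSpace ℝ (Fin d)) := fun i =>
      {x | ∀ j, x j ∈ Set.Icc ((R • c) j) ((R • c) j + (if j = i then w else R*r))} with hBlo_def
    set Bhi : Fin d → Set (EuclideanSpace ℝ (Fin d)) := fun i =>
      {x | ∀ j, x j ∈ Set.Icc ((R • c) j + (R*r) - (if j = i then w else R*r))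
        ((R • c) j + (R*r))} with hBhi_def
    set P : Fin d → Set (EuclideanSpace ℝ (Fin d)) := fun i =>
      (ζ ∩ Blo i) ∪ (ζ ∩ Bhi i) with hP_def
    have hn1 : ∀ i j : Fin d, 1 ≤ (if j = i then M else N) := by
      intro i j; by_cases h : j = i <;> simp [h, hM_def, hN1]
    have hlen : ∀ i j : Fin d, (if j = i then w else R*r) ≤ s * (if j = i then M else N) := by
      intro i j; by_cases h : j = i <;> simp only [h, if_pos, if_neg, if_true, if_false]
      · exact hwM
      · exact hLN
    have hprod : ∀ i : Fin d, (∏ j, (if j = i then M else N)) = M * N^(d-1) := by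
      intro i
      rw [← Finset.mul_prod_erase Finset.univ _ (Finset.mem_univ i), if_pos rfl]
      congr 1
      rw [Finset.prod_congr rfl (fun j hj => if_neg (Finset.ne_of_mem_erase hj)),
        Finset.prod_const, Finset.card_erase_of_mem (Finset.mem_univ i),
        Finset.card_univ, Fintype.card_fin]
    have hPlo : ∀ i, (ζ ∩ Blo i).Finite ∧ (ζ ∩ Blo i).ncard ≤ M * N^(d-1) := by
      intro i
      have h := hardcore_box_count hs hsd hζ (fun j => (R • c) j)
        (fun j => (R • c) j + (if j = i then w else R*r))
        (fun j => if j = i then M else N) (hn1 i)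
        (by intro j; simp only [add_sub_cancel_left]; exact hlen i j)
      rw [hprod i] at h
      exact h
    have hPhi : ∀ i, (ζ ∩ Bhi i).Finite ∧ (ζ ∩ Bhi i).ncard ≤ M * N^(d-1) := by
      intro i
      have h := hardcore_box_count hs hsd hζ
        (fun j => (R • c) j + (R*r) - (if j = i then w else R*r))
        (fun j => (R • c) j + (R*r))
        (fun j => if j = i then M else N) (hn1 i)
        (by intro j; have := hlen i j; simp only; linarith)
      rw [hprod i] at h
      exact h
    have hPfin : ∀ i, (P i).Finite := fun i => ((hPlo i).1.union (hPhi i).1)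
    have hPcard : ∀ i, (P i).ncard ≤ 2 * (M * N^(d-1)) := by
      intro i
      calc (P i).ncard ≤ (ζ ∩ Blo i).ncard + (ζ ∩ Bhi i).ncard := Set.ncard_union_le _ _
        _ ≤ M * N^(d-1) + M * N^(d-1) := Nat.add_le_add (hPlo i).2 (hPhi i).2
        _ = 2 * (M * N^(d-1)) := by ring
    have hcover : ζ ∩ (Q \ T) ⊆ ⋃ i, P i := by
      rintro x ⟨hxζ, hxQ, hxT⟩
      have hxz : x - z ∉ Q := by
        intro h
        exact hxT ⟨x - z, h, by simp⟩
      rw [hQ_def, aux_mem_rectCube] at hxz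
      push_neg at hxz
      obtain ⟨i, hi⟩ := hxz
      rw [Set.mem_Icc, not_and_or, not_le, not_le] at hi
      have hxQ' : ∀ j, x j ∈ Set.Icc ((R • c) j) ((R • c) j + R*r) := hxQ
      have hsub : (x - z) i = x i - z i := rfl
      rw [hsub] at hi
      have hzi := hz i
      rcases hi with hi | hi
      · -- lower slab
        refine Set.mem_iUnion.mpr ⟨i, Or.inl ⟨hxζ, ?_⟩⟩
        intro j
        refine ⟨(hxQ' j).1, ?_⟩
        by_cases hji : j = i
        · subst hji
          rw [if_pos rfl]
          have := abs_le.mp hzi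
          linarith
        · rw [if_neg hji]
          exact (hxQ' j).2
      · -- upper slab
        refine Set.mem_iUnion.mpr ⟨i, Or.inr ⟨hxζ, ?_⟩⟩
        intro j
        refine ⟨?_, (hxQ' j).2⟩
        by_cases hji : j = i
        · subst hji
          rw [if_pos rfl]
          have := abs_le.mp hzi
          linarith
        · rw [if_neg hji]
          have := (hxQ' j).1
          linarith
    have hUfin : (⋃ i, P i).Finite := Set.finite_iUnion hPfin
    have hcard : (ζ ∩ (Q \ T)).ncard ≤ d * (2 * (M * N^(d-1))) := by
      calc (ζ ∩ (Q \ T)).ncard ≤ (⋃ i, P i).ncard := Set.ncard_le_ncard hcover hUfin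
        _ ≤ ∑ i, (P i).ncard := aux_ncard_iUnion_le P
        _ ≤ ∑ _i : Fin d, 2 * (M * N^(d-1)) := Finset.sum_le_sum (fun i _ => hPcard i)
        _ = d * (2 * (M * N^(d-1))) := by
            rw [Finset.sum_const, Finset.card_univ, Fintype.card_fin, smul_eq_mul]
    have hcardR : ((ζ ∩ (Q \ T)).ncard : ℝ) ≤ A * R^(d-1) := by
      have h1 : ((ζ ∩ (Q \ T)).ncard : ℝ) ≤ (d:ℝ) * (2 * ((M:ℝ) * (N:ℝ)^(d-1))) := by
        exact_mod_cast hcard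
      have h2 : (N:ℝ)^(d-1) ≤ ((2*r/s) * R)^(d-1) :=
        pow_le_pow_left₀ (Nat.cast_nonneg N) hNle _
      have h3 : ((2*r/s) * R)^(d-1) = (2*r/s)^(d-1) * R^(d-1) := mul_pow _ _ _
      calc ((ζ ∩ (Q \ T)).ncard : ℝ) ≤ (d:ℝ) * (2 * ((M:ℝ) * (N:ℝ)^(d-1))) := h1
        _ ≤ (d:ℝ) * (2 * ((M:ℝ) * ((2*r/s) * R)^(d-1))) := by gcongr
        _ = A * R^(d-1) := by rw [hA_def, h3]; ring
    -- diameter bound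
    have hdiam : Metric.diam Q ≤ Real.sqrt d * (R*r) := by
      rw [mul_comm]
      apply Metric.diam_le_of_forall_dist_le (by positivity)
      intro x hx y hy
      apply aux_dist_le x y hL.le
      intro i
      have hxi : x i ∈ Set.Icc ((R•c) i) ((R•c) i + R*r) := hx i
      have hyi : y i ∈ Set.Icc ((R•c) i) ((R•c) i + R*r) := hy i
      rw [Real.dist_eq, abs_le]
      constructor
      · linarith [hxi.1, hyi.2]
      · linarith [hxi.2, hyi.1]
    -- localization
    have hsub1 : S (Q ∩ T) ζ = S Q (ζ ∩ T) := by
      apply hloc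
      ext x; simp only [Set.mem_inter_iff]; tauto
    -- smoothness
    have hsm := hsmooth (R • c) (R * r) hL (ζ ∩ T) (ζ \ T)
      (aux_hardcore_mono hζ Set.inter_subset_left)
      (aux_hardcore_mono hζ Set.diff_subset)
    rw [Set.inter_union_diff] at hsm
    have hseteq : (ζ \ T) ∩ Q = ζ ∩ (Q \ T) := by
      ext x; simp only [Set.mem_inter_iff, Set.mem_diff]; tauto
    rw [hseteq] at hsm
    -- assemble
    have hstep2 : C * Metric.diam Q ^ p * ((ζ ∩ (Q \ T)).ncard : ℝ) ^ α ≤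
        C * (Real.sqrt d * (R*r))^p * (A * R^(d-1))^α := by
      apply mul_le_mul
      · exact mul_le_mul_of_nonneg_left
          (Real.rpow_le_rpow Metric.diam_nonneg hdiam (by linarith)) hC.le
      · exact Real.rpow_le_rpow (Nat.cast_nonneg _) hcardR hα.le
      · exact Real.rpow_nonneg (Nat.cast_nonneg _) _
      · positivity
    have hval : (1/R^d) * (C * (Real.sqrt d * (R*r))^p * (A * R^(d-1))^α) =
        (C * ((Real.sqrt d * r)^p * A^α)) * R ^ e := by
      have ham : Real.sqrt d * (R*r) = (Real.sqrt d * r) * R := by ring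
      rw [ham, Real.mul_rpow (by positivity) hR0.le, Real.mul_rpow hA (by positivity)]
      have h3 : (R^(d-1):ℝ)^α = R^(((d:ℝ)-1)*α) := by
        rw [← Real.rpow_natCast R (d-1), ← Real.rpow_mul hR0.le]
        congr 1
        rw [Nat.cast_sub hd1]
        norm_num
      rw [h3]
      have h4 : (1:ℝ)/R^d = R^(-(d:ℝ)) := by
        rw [Real.rpow_neg hR0.le, Real.rpow_natCast, one_div]
      rw [h4]
      have h6 : R ^ e = R^(-(d:ℝ)) * (R^p * R^(((d:ℝ)-1)*α)) := by
        rw [← Real.rpow_add hR0, ← Real.rpow_add hR0]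
        congr 1
        rw [he_def, hα_def]
        field_simp
        ring
      rw [h6]
      ring
    calc (1/R^d) * |S Q ζ - S (Q ∩ T) ζ|
        = (1/R^d) * |S Q ζ - S Q (ζ ∩ T)| := by rw [hsub1]
      _ ≤ (1/R^d) * (C * Metric.diam Q ^ p * ((ζ ∩ (Q \ T)).ncard : ℝ) ^ α) :=
          mul_le_mul_of_nonneg_left hsm (by positivity)
      _ ≤ (1/R^d) * (C * (Real.sqrt d * (R*r))^p * (A * R^(d-1))^α) :=
          mul_le_mul_of_nonneg_left hstep2 (by positivity)
      _ = (C * ((Real.sqrt d * r)^p * A^α)) * R ^ e := hval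
  · have h1 : Tendsto (fun R : ℝ => R ^ e) atTop (nhds 0) := by
      have := tendsto_rpow_neg_atTop (y := -e) (by linarith)
      simpa [neg_neg] using this
    have h2 := h1.const_mul (C * ((Real.sqrt d * r)^p * A^α))
    simpa using h2
end
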